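/- Let $0 < s < 1$, $1 < p < \infty$ with $sp = 1$, and let $f_1, f_2$ be functions on the reference triangle $T$ with $f_1 \in W^{s,p}(T)$, $f_2 \in W^{s,p}(T)$, and $\int_T |f_1(\mathbf{x}) - f_2(\mathbf{x})|^p \frac{d\mathbf{x}}{x_2} < \infty$. Then $\int_T \int_T \frac{|f_1(\mathbf{x}) - f_2(\mathbf{y})|^p}{|\mathbf{x}_r - \mathbf{y}|^{sp+2}}\,d\mathbf{y}\,d\mathbf{x} < \infty$, where $\mathbf{x}_r = (x_1, -x_2)$. Moreover the left side is bounded by a constant (depending on $s,p$) times $\|f_1\|_{W^{s,p}(T)}^p + \|f_2\|_{W^{s,p}(T)}^p + \int_T |f_1 - f_2|^p x_2^{-1}\,d\mathbf{x}$. -/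

import Mathlib

open MeasureTheory Set
open scoped ENNReal

/-- The open reference triangle in `ℝ²`. -/
def refTri : Set (ℝ × ℝ) := {y : ℝ × ℝ | 0 < y.1 ∧ 0 < y.2 ∧ y.1 + y.2 < 1}

/-- The `W^{s,p}(T)` norm to the `p`-th power (Gagliardo form). -/
noncomputable def gagNorm (p s : ℝ) (g : ℝ × ℝ → ℝ) : ℝ≥0∞ :=
  (∫⁻ x in refTri, ENNReal.ofReal (|g x| ^ p)) +
    ∫⁻ x in refTri, ∫⁻ y in refTri,
      ENNReal.ofReal (|g x - g y| ^ p /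
        (((x.1 - y.1) ^ 2 + (x.2 - y.2) ^ 2) ^ ((s * p + 2) / 2)))

/-- The mixed reflected double integral with kernel `|x_r - y|^{-(sp+2)}`,
where `x_r = (x₁, -x₂)`. -/
noncomputable def mixedInt (p s : ℝ) (f1 f2 : ℝ × ℝ → ℝ) : ℝ≥0∞ :=
  ∫⁻ x in refTri, ∫⁻ y in refTri,
    ENNReal.ofReal (|f1 x - f2 y| ^ p /
      (((x.1 - y.1) ^ 2 + (x.2 + y.2) ^ 2) ^ ((s * p + 2) / 2)))

lemma measurableSet_refTri : MeasurableSet refTri := by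
  have : refTri = ((fun y : ℝ × ℝ => y.1) ⁻¹' Ioi 0) ∩
      (((fun y : ℝ × ℝ => y.2) ⁻¹' Ioi 0) ∩ ((fun y : ℝ × ℝ => y.1 + y.2) ⁻¹' Iio 1)) := by
    ext y; simp [refTri, and_assoc]
  rw [this]
  exact (measurable_fst measurableSet_Ioi).inter
    ((measurable_snd measurableSet_Ioi).inter
      ((measurable_fst.add measurable_snd) measurableSet_Iio))

lemma aux_mp_sub_left (a : ℝ) : MeasurePreserving (fun t : ℝ => a - t) volume volume := by
  simp_rw [sub_eq_add_neg]
  exact (measurePreserving_add_left volume a).comp (Measure.measurePreserving_neg volume)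

open Real in
lemma aux_kernel1D (a c : ℝ) (hc : 0 < c) :
    ∫⁻ t : ℝ, ENNReal.ofReal (((a - t) ^ 2 + c ^ 2)⁻¹) = ENNReal.ofReal (π / c) := by
  have hmeas : Measurable fun u : ℝ => ENNReal.ofReal ((u ^ 2 + c ^ 2)⁻¹) := by fun_prop
  have h1 : (∫⁻ t : ℝ, ENNReal.ofReal (((a - t) ^ 2 + c ^ 2)⁻¹))
      = ∫⁻ u : ℝ, ENNReal.ofReal ((u ^ 2 + c ^ 2)⁻¹) :=
    (aux_mp_sub_left a).lintegral_comp hmeas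
  rw [h1]
  have hfun : ∀ u : ℝ, (u ^ 2 + c ^ 2)⁻¹ = c⁻¹ ^ 2 * (1 + (c⁻¹ * u) ^ 2)⁻¹ := by
    intro u; field_simp; ring
  have hint : Integrable (fun u : ℝ => (u ^ 2 + c ^ 2)⁻¹) := by
    have h0 : Integrable (fun x : ℝ => (1 + x ^ 2)⁻¹) := integrable_inv_one_add_sq
    have h1' := (h0.comp_mul_left' (inv_ne_zero hc.ne')).const_mul (c⁻¹ ^ 2)
    exact h1'.congr (Filter.Eventually.of_forall fun u => (hfun u).symm)
  rw [← ofReal_integral_eq_lintegral_ofReal hint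
      (Filter.Eventually.of_forall fun u => by positivity)]
  congr 1
  have h2 : (∫ u : ℝ, (u ^ 2 + c ^ 2)⁻¹) = c⁻¹ ^ 2 * ∫ u : ℝ, (1 + (c⁻¹ * u) ^ 2)⁻¹ := by
    simp_rw [hfun]; exact integral_const_mul _ _
  rw [h2, Measure.integral_comp_inv_mul_left (fun x : ℝ => (1 + x ^ 2)⁻¹) c,
    integral_univ_inv_one_add_sq, smul_eq_mul, abs_of_pos hc]
  field_simp

lemma aux_tail1D (b : ℝ) (hb : 0 < b) :
    ∫⁻ t in Ioi (0:ℝ), ENNReal.ofReal (((b + t) ^ 2)⁻¹) = ENNReal.ofReal b⁻¹ := by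
  have hemb : MeasurableEmbedding (fun t : ℝ => b + t) :=
    (MeasurableEquiv.addLeft b).measurableEmbedding
  have hpre : (fun t : ℝ => b + t) ⁻¹' Ioi b = Ioi 0 := by
    ext t; simp [lt_add_iff_pos_right]
  have h1 : (∫⁻ t in Ioi (0:ℝ), ENNReal.ofReal (((b + t) ^ 2)⁻¹))
      = ∫⁻ u in Ioi b, ENNReal.ofReal ((u ^ 2)⁻¹) := by
    rw [← hpre]
    exact (measurePreserving_add_left volume b).setLIntegral_comp_preimage_emb hemb
      (fun u => ENNReal.ofReal ((u ^ 2)⁻¹)) (Ioi b)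
  rw [h1]
  have h2 : (∫⁻ u in Ioi b, ENNReal.ofReal ((u ^ 2)⁻¹))
      = ∫⁻ u in Ioi b, ENNReal.ofReal (u ^ (-2:ℝ)) := by
    refine setLIntegral_congr_fun measurableSet_Ioi (fun u hu => ?_)
    congr 1
    rw [Real.rpow_neg (le_of_lt (hb.trans hu)), show (2:ℝ) = ((2:ℕ):ℝ) by norm_num,
      Real.rpow_natCast]
  rw [h2, ← ofReal_integral_eq_lintegral_ofReal
      (integrableOn_Ioi_rpow_of_lt (by norm_num) hb)
      ((ae_restrict_iff' measurableSet_Ioi).2 (Filter.Eventually.of_forall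
        fun u hu => Real.rpow_nonneg (le_of_lt (hb.trans hu)) _))]
  rw [integral_Ioi_rpow_of_lt (by norm_num) hb]
  norm_num
  rw [Real.rpow_neg_one]

lemma aux_pow32_bound (d c : ℝ) (hc : 0 < c) :
    ((d ^ 2 + c ^ 2) ^ ((3:ℝ)/2))⁻¹ ≤ c⁻¹ * (d ^ 2 + c ^ 2)⁻¹ := by
  have hX : 0 < d ^ 2 + c ^ 2 := by positivity
  rw [← mul_inv]
  have h1 : (d ^ 2 + c ^ 2) ^ ((3:ℝ)/2)
      = (d ^ 2 + c ^ 2) ^ ((1:ℝ)/2) * (d ^ 2 + c ^ 2) := by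
    rw [show (3:ℝ)/2 = 1/2 + 1 by norm_num, Real.rpow_add hX, Real.rpow_one]
  have h2 : c ≤ (d ^ 2 + c ^ 2) ^ ((1:ℝ)/2) := by
    have : (c ^ 2) ^ ((1:ℝ)/2) = c := by
      rw [← Real.rpow_natCast c 2, ← Real.rpow_mul hc.le]; norm_num
    rw [← this]
    exact Real.rpow_le_rpow (by positivity) (by nlinarith) (by norm_num)
  have h3 : c * (d ^ 2 + c ^ 2) ≤ (d ^ 2 + c ^ 2) ^ ((3:ℝ)/2) := by
    rw [h1]; exact mul_le_mul_of_nonneg_right h2 hX.le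
  exact inv_anti₀ (by positivity) h3

open Real in
lemma aux_inner2D (x₁ x₂ : ℝ) (hx2 : 0 < x₂) :
    ∫⁻ y in (univ : Set ℝ) ×ˢ Ioi (0:ℝ),
      ENNReal.ofReal ((((x₁ - y.1) ^ 2 + (x₂ + y.2) ^ 2) ^ ((3:ℝ)/2))⁻¹)
      ≤ ENNReal.ofReal (π / x₂) := by
  have hmeas : Measurable fun y : ℝ × ℝ =>
      ENNReal.ofReal ((((x₁ - y.1) ^ 2 + (x₂ + y.2) ^ 2) ^ ((3:ℝ)/2))⁻¹) := by fun_prop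
  rw [Measure.volume_eq_prod, ← Measure.prod_restrict, Measure.restrict_univ,
    lintegral_prod_symm' _ hmeas]
  calc ∫⁻ y₂ in Ioi (0:ℝ), ∫⁻ y₁ : ℝ,
        ENNReal.ofReal ((((x₁ - y₁) ^ 2 + (x₂ + y₂) ^ 2) ^ ((3:ℝ)/2))⁻¹)
      ≤ ∫⁻ y₂ in Ioi (0:ℝ), ENNReal.ofReal (π * (((x₂ + y₂) ^ 2)⁻¹)) := by
        refine setLIntegral_mono' measurableSet_Ioi fun y₂ hy₂ => ?_
        have hc : 0 < x₂ + y₂ := add_pos hx2 hy₂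
        calc ∫⁻ y₁ : ℝ, ENNReal.ofReal ((((x₁ - y₁) ^ 2 + (x₂ + y₂) ^ 2) ^ ((3:ℝ)/2))⁻¹)
            ≤ ∫⁻ y₁ : ℝ, ENNReal.ofReal ((x₂ + y₂)⁻¹ * ((x₁ - y₁) ^ 2 + (x₂ + y₂) ^ 2)⁻¹) :=
              lintegral_mono fun y₁ => ENNReal.ofReal_le_ofReal (aux_pow32_bound _ _ hc)
          _ = ENNReal.ofReal ((x₂ + y₂)⁻¹)
              * ∫⁻ y₁ : ℝ, ENNReal.ofReal (((x₁ - y₁) ^ 2 + (x₂ + y₂) ^ 2)⁻¹) := by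
              simp_rw [ENNReal.ofReal_mul (inv_nonneg.2 hc.le)]
              exact lintegral_const_mul _ (by fun_prop)
          _ = ENNReal.ofReal ((x₂ + y₂)⁻¹) * ENNReal.ofReal (π / (x₂ + y₂)) := by
              rw [aux_kernel1D x₁ _ hc]
          _ = ENNReal.ofReal (π * (((x₂ + y₂) ^ 2)⁻¹)) := by
              rw [← ENNReal.ofReal_mul (inv_nonneg.2 hc.le)]
              congr 1; rw [mul_comm, div_eq_mul_inv, mul_assoc, ← mul_inv, ← sq]
    _ = ENNReal.ofReal π * ∫⁻ y₂ in Ioi (0:ℝ), ENNReal.ofReal (((x₂ + y₂) ^ 2)⁻¹) := by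
        simp_rw [ENNReal.ofReal_mul Real.pi_nonneg]
        exact lintegral_const_mul _ (by fun_prop)
    _ = ENNReal.ofReal π * ENNReal.ofReal x₂⁻¹ := by rw [aux_tail1D x₂ hx2]
    _ = ENNReal.ofReal (π / x₂) := by
        rw [div_eq_mul_inv, ENNReal.ofReal_mul Real.pi_nonneg]

lemma aux_rpow_add_le (p : ℝ) (hp : 1 ≤ p) {a b : ℝ} (ha : 0 ≤ a) (hb : 0 ≤ b) :
    (a + b) ^ p ≤ 2 ^ p * (a ^ p + b ^ p) := by
  have hp0 : (0:ℝ) ≤ p := le_trans zero_le_one hp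
  have hm : a + b ≤ 2 * max a b := by
    rcases le_total a b with h | h
    · rw [max_eq_right h]; linarith
    · rw [max_eq_left h]; linarith
  have h0 : (0:ℝ) ≤ max a b := le_max_of_le_left ha
  calc (a + b) ^ p ≤ (2 * max a b) ^ p :=
        Real.rpow_le_rpow (add_nonneg ha hb) hm hp0
    _ = 2 ^ p * (max a b) ^ p := Real.mul_rpow (by norm_num) h0
    _ ≤ 2 ^ p * (a ^ p + b ^ p) := by
        apply mul_le_mul_of_nonneg_left _ (Real.rpow_nonneg (by norm_num) p)
        rcases le_total a b with h | h
        · rw [max_eq_right h]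
          nlinarith [Real.rpow_nonneg ha p]
        · rw [max_eq_left h]
          nlinarith [Real.rpow_nonneg hb p]


open scoped Real

/-- For `sp = 1`: if `f₁, f₂ ∈ W^{s,p}(T)` and `∫_T |f₁ - f₂|^p x₂⁻¹ < ∞`, then
the reflected mixed double integral is finite, and it is bounded by a constant
(depending only on `s, p`) times
`‖f₁‖_{W^{s,p}}^p + ‖f₂‖_{W^{s,p}}^p + ∫_T |f₁ - f₂|^p x₂⁻¹`. -/
theorem stmt16 (p s : ℝ) (hp : 1 < p) (hs0 : 0 < s) (hs1 : s < 1) (hsp : s * p = 1) :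
    ∃ C : ℝ, 0 < C ∧ ∀ f1 f2 : ℝ × ℝ → ℝ, Measurable f1 → Measurable f2 →
      gagNorm p s f1 < ⊤ → gagNorm p s f2 < ⊤ →
      (∫⁻ x in refTri, ENNReal.ofReal (|f1 x - f2 x| ^ p / x.2)) < ⊤ →
      (mixedInt p s f1 f2 < ⊤ ∧
        mixedInt p s f1 f2 ≤ ENNReal.ofReal C *
          (gagNorm p s f1 + gagNorm p s f2 +
            ∫⁻ x in refTri, ENNReal.ofReal (|f1 x - f2 x| ^ p / x.2))) := by
  have hp0 : (0:ℝ) < p := lt_trans one_pos hp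
  have hexp : (s * p + 2) / 2 = (3:ℝ) / 2 := by rw [hsp]; norm_num
  refine ⟨2 ^ p * (π + 1), by positivity, ?_⟩
  intro f1 f2 hf1 hf2 hg1 hg2 hD
  have hT : MeasurableSet refTri := measurableSet_refTri
  set S : ℝ≥0∞ := gagNorm p s f1 + gagNorm p s f2 +
      ∫⁻ x in refTri, ENNReal.ofReal (|f1 x - f2 x| ^ p / x.2) with hSdef
  have hSlt : S < ⊤ := ENNReal.add_lt_top.2 ⟨ENNReal.add_lt_top.2 ⟨hg1, hg2⟩, hD⟩
  suffices hmain : mixedInt p s f1 f2 ≤ ENNReal.ofReal (2 ^ p * (π + 1)) * S by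
    exact ⟨lt_of_le_of_lt hmain (ENNReal.mul_lt_top ENNReal.ofReal_lt_top hSlt), hmain⟩
  -- pointwise bound
  have key : ∀ x ∈ refTri, ∀ y ∈ refTri,
      ENNReal.ofReal (|f1 x - f2 y| ^ p /
          (((x.1 - y.1) ^ 2 + (x.2 + y.2) ^ 2) ^ ((3:ℝ)/2)))
        ≤ ENNReal.ofReal (2 ^ p) *
            (ENNReal.ofReal (|f1 x - f2 x| ^ p) *
              ENNReal.ofReal ((((x.1 - y.1) ^ 2 + (x.2 + y.2) ^ 2) ^ ((3:ℝ)/2))⁻¹) +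
             ENNReal.ofReal (|f2 x - f2 y| ^ p /
              (((x.1 - y.1) ^ 2 + (x.2 - y.2) ^ 2) ^ ((3:ℝ)/2)))) := by
    intro x hx y hy
    obtain ⟨hx1, hx2, -⟩ := hx
    obtain ⟨hy1, hy2, -⟩ := hy
    have hc : 0 < x.2 + y.2 := add_pos hx2 hy2
    have hKbase : 0 < (x.1 - y.1) ^ 2 + (x.2 + y.2) ^ 2 :=
      add_pos_of_nonneg_of_pos (sq_nonneg _) (pow_pos hc 2)
    have hK : 0 < ((x.1 - y.1) ^ 2 + (x.2 + y.2) ^ 2) ^ ((3:ℝ)/2) :=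
      Real.rpow_pos_of_pos hKbase _
    have hA : 0 ≤ |f1 x - f2 x| ^ p := Real.rpow_nonneg (abs_nonneg _) _
    have hB : 0 ≤ |f2 x - f2 y| ^ p := Real.rpow_nonneg (abs_nonneg _) _
    have h2p : (0:ℝ) ≤ 2 ^ p := Real.rpow_nonneg (by norm_num) _
    -- B / K ≤ B / Kg
    have hBK : |f2 x - f2 y| ^ p / (((x.1 - y.1) ^ 2 + (x.2 + y.2) ^ 2) ^ ((3:ℝ)/2))
        ≤ |f2 x - f2 y| ^ p / (((x.1 - y.1) ^ 2 + (x.2 - y.2) ^ 2) ^ ((3:ℝ)/2)) := by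
      by_cases hxy : x = y
      · subst hxy
        simp [sub_self, abs_zero, Real.zero_rpow hp0.ne']
      · have hne : x.1 ≠ y.1 ∨ x.2 ≠ y.2 := by
          by_contra h
          push_neg at h
          exact hxy (Prod.ext h.1 h.2)
        have hKgbase : 0 < (x.1 - y.1) ^ 2 + (x.2 - y.2) ^ 2 := by
          rcases hne with h | h
          · have : 0 < |x.1 - y.1| := abs_pos.2 (sub_ne_zero.2 h)
            nlinarith [sq_nonneg (x.2 - y.2), sq_abs (x.1 - y.1)]
          · have : 0 < |x.2 - y.2| := abs_pos.2 (sub_ne_zero.2 h)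
            nlinarith [sq_nonneg (x.1 - y.1), sq_abs (x.2 - y.2)]
        have hKg : 0 < ((x.1 - y.1) ^ 2 + (x.2 - y.2) ^ 2) ^ ((3:ℝ)/2) :=
          Real.rpow_pos_of_pos hKgbase _
        have hle : ((x.1 - y.1) ^ 2 + (x.2 - y.2) ^ 2) ^ ((3:ℝ)/2)
            ≤ ((x.1 - y.1) ^ 2 + (x.2 + y.2) ^ 2) ^ ((3:ℝ)/2) :=
          Real.rpow_le_rpow hKgbase.le (by nlinarith) (by norm_num)
        exact div_le_div_of_nonneg_left hB hKg hle
    -- real chain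
    have hreal : |f1 x - f2 y| ^ p /
        (((x.1 - y.1) ^ 2 + (x.2 + y.2) ^ 2) ^ ((3:ℝ)/2))
        ≤ 2 ^ p * (|f1 x - f2 x| ^ p *
            ((((x.1 - y.1) ^ 2 + (x.2 + y.2) ^ 2) ^ ((3:ℝ)/2))⁻¹))
          + 2 ^ p * (|f2 x - f2 y| ^ p /
            (((x.1 - y.1) ^ 2 + (x.2 - y.2) ^ 2) ^ ((3:ℝ)/2))) := by
      have tri : |f1 x - f2 y| ^ p
          ≤ 2 ^ p * (|f1 x - f2 x| ^ p + |f2 x - f2 y| ^ p) := by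
        calc |f1 x - f2 y| ^ p ≤ (|f1 x - f2 x| + |f2 x - f2 y|) ^ p :=
              Real.rpow_le_rpow (abs_nonneg _) (abs_sub_le _ _ _) hp0.le
          _ ≤ 2 ^ p * (|f1 x - f2 x| ^ p + |f2 x - f2 y| ^ p) :=
              aux_rpow_add_le p hp.le (abs_nonneg _) (abs_nonneg _)
      calc |f1 x - f2 y| ^ p / (((x.1 - y.1) ^ 2 + (x.2 + y.2) ^ 2) ^ ((3:ℝ)/2))
          ≤ (2 ^ p * (|f1 x - f2 x| ^ p + |f2 x - f2 y| ^ p))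
              / (((x.1 - y.1) ^ 2 + (x.2 + y.2) ^ 2) ^ ((3:ℝ)/2)) := by gcongr
        _ = 2 ^ p * (|f1 x - f2 x| ^ p *
              ((((x.1 - y.1) ^ 2 + (x.2 + y.2) ^ 2) ^ ((3:ℝ)/2))⁻¹))
            + 2 ^ p * (|f2 x - f2 y| ^ p
              / (((x.1 - y.1) ^ 2 + (x.2 + y.2) ^ 2) ^ ((3:ℝ)/2))) := by
            field_simp
        _ ≤ _ := by gcongr
    calc ENNReal.ofReal (|f1 x - f2 y| ^ p /
          (((x.1 - y.1) ^ 2 + (x.2 + y.2) ^ 2) ^ ((3:ℝ)/2)))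
        ≤ ENNReal.ofReal (2 ^ p * (|f1 x - f2 x| ^ p *
              ((((x.1 - y.1) ^ 2 + (x.2 + y.2) ^ 2) ^ ((3:ℝ)/2))⁻¹))
            + 2 ^ p * (|f2 x - f2 y| ^ p /
              (((x.1 - y.1) ^ 2 + (x.2 - y.2) ^ 2) ^ ((3:ℝ)/2)))) :=
          ENNReal.ofReal_le_ofReal hreal
      _ ≤ ENNReal.ofReal (2 ^ p * (|f1 x - f2 x| ^ p *
              ((((x.1 - y.1) ^ 2 + (x.2 + y.2) ^ 2) ^ ((3:ℝ)/2))⁻¹)))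
          + ENNReal.ofReal (2 ^ p * (|f2 x - f2 y| ^ p /
              (((x.1 - y.1) ^ 2 + (x.2 - y.2) ^ 2) ^ ((3:ℝ)/2)))) :=
          ENNReal.ofReal_add_le
      _ = _ := by
          rw [ENNReal.ofReal_mul h2p, ENNReal.ofReal_mul h2p, ENNReal.ofReal_mul hA,
            mul_add]
  -- measurability facts
  have mPhi : Measurable fun q : (ℝ × ℝ) × (ℝ × ℝ) =>
      ENNReal.ofReal (|f1 q.1 - f2 q.1| ^ p) *
        ENNReal.ofReal ((((q.1.1 - q.2.1) ^ 2 + (q.1.2 + q.2.2) ^ 2) ^ ((3:ℝ)/2))⁻¹) := by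
    fun_prop
  have mPsi : Measurable fun q : (ℝ × ℝ) × (ℝ × ℝ) =>
      ENNReal.ofReal (|f2 q.1 - f2 q.2| ^ p /
        (((q.1.1 - q.2.1) ^ 2 + (q.1.2 - q.2.2) ^ 2) ^ ((3:ℝ)/2))) := by
    fun_prop
  have mPhiI : Measurable fun x : ℝ × ℝ => ∫⁻ y in refTri,
      ENNReal.ofReal (|f1 x - f2 x| ^ p) *
        ENNReal.ofReal ((((x.1 - y.1) ^ 2 + (x.2 + y.2) ^ 2) ^ ((3:ℝ)/2))⁻¹) :=
    mPhi.lintegral_prod_right'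
  have mPsiI : Measurable fun x : ℝ × ℝ => ∫⁻ y in refTri,
      ENNReal.ofReal (|f2 x - f2 y| ^ p /
        (((x.1 - y.1) ^ 2 + (x.2 - y.2) ^ 2) ^ ((3:ℝ)/2))) :=
    mPsi.lintegral_prod_right'
  -- rewrite exponents
  have hmix : mixedInt p s f1 f2 = ∫⁻ x in refTri, ∫⁻ y in refTri,
      ENNReal.ofReal (|f1 x - f2 y| ^ p /
        (((x.1 - y.1) ^ 2 + (x.2 + y.2) ^ 2) ^ ((3:ℝ)/2))) := by
    unfold mixedInt; simp_rw [hexp]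
  have hgag2 : (∫⁻ x in refTri, ∫⁻ y in refTri,
      ENNReal.ofReal (|f2 x - f2 y| ^ p /
        (((x.1 - y.1) ^ 2 + (x.2 - y.2) ^ 2) ^ ((3:ℝ)/2)))) ≤ gagNorm p s f2 := by
    unfold gagNorm; simp_rw [hexp]; exact le_add_self
  -- bound on the Phi part
  have hPhiBound : (∫⁻ x in refTri, ∫⁻ y in refTri,
      ENNReal.ofReal (|f1 x - f2 x| ^ p) *
        ENNReal.ofReal ((((x.1 - y.1) ^ 2 + (x.2 + y.2) ^ 2) ^ ((3:ℝ)/2))⁻¹))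
      ≤ ENNReal.ofReal π *
        ∫⁻ x in refTri, ENNReal.ofReal (|f1 x - f2 x| ^ p / x.2) := by
    have hptw : ∀ x ∈ refTri, (∫⁻ y in refTri,
        ENNReal.ofReal (|f1 x - f2 x| ^ p) *
          ENNReal.ofReal ((((x.1 - y.1) ^ 2 + (x.2 + y.2) ^ 2) ^ ((3:ℝ)/2))⁻¹))
        ≤ ENNReal.ofReal π * ENNReal.ofReal (|f1 x - f2 x| ^ p / x.2) := by
      intro x hx
      obtain ⟨hx1, hx2, -⟩ := hx
      have hA : 0 ≤ |f1 x - f2 x| ^ p := Real.rpow_nonneg (abs_nonneg _) _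
      have hsub : refTri ⊆ (univ : Set ℝ) ×ˢ Ioi (0:ℝ) := fun y hy => ⟨mem_univ _, hy.2.1⟩
      calc (∫⁻ y in refTri, ENNReal.ofReal (|f1 x - f2 x| ^ p) *
            ENNReal.ofReal ((((x.1 - y.1) ^ 2 + (x.2 + y.2) ^ 2) ^ ((3:ℝ)/2))⁻¹))
          = ENNReal.ofReal (|f1 x - f2 x| ^ p) * ∫⁻ y in refTri,
              ENNReal.ofReal ((((x.1 - y.1) ^ 2 + (x.2 + y.2) ^ 2) ^ ((3:ℝ)/2))⁻¹) :=
            lintegral_const_mul _ (by fun_prop)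
        _ ≤ ENNReal.ofReal (|f1 x - f2 x| ^ p) * ENNReal.ofReal (π / x.2) :=
            mul_le_mul_right
              ((lintegral_mono_set hsub).trans (aux_inner2D x.1 x.2 hx2)) _
        _ = ENNReal.ofReal π * ENNReal.ofReal (|f1 x - f2 x| ^ p / x.2) := by
            rw [← ENNReal.ofReal_mul hA, ← ENNReal.ofReal_mul Real.pi_nonneg]
            congr 1
            rw [div_eq_mul_inv, div_eq_mul_inv]; ring
    calc (∫⁻ x in refTri, ∫⁻ y in refTri,
          ENNReal.ofReal (|f1 x - f2 x| ^ p) *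
            ENNReal.ofReal ((((x.1 - y.1) ^ 2 + (x.2 + y.2) ^ 2) ^ ((3:ℝ)/2))⁻¹))
        ≤ ∫⁻ x in refTri,
            ENNReal.ofReal π * ENNReal.ofReal (|f1 x - f2 x| ^ p / x.2) :=
          setLIntegral_mono' hT hptw
      _ = ENNReal.ofReal π *
            ∫⁻ x in refTri, ENNReal.ofReal (|f1 x - f2 x| ^ p / x.2) :=
          lintegral_const_mul _ (by fun_prop)
  -- assemble
  rw [hmix]
  calc (∫⁻ x in refTri, ∫⁻ y in refTri,
        ENNReal.ofReal (|f1 x - f2 y| ^ p /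
          (((x.1 - y.1) ^ 2 + (x.2 + y.2) ^ 2) ^ ((3:ℝ)/2))))
      ≤ ∫⁻ x in refTri, ∫⁻ y in refTri, ENNReal.ofReal (2 ^ p) *
          (ENNReal.ofReal (|f1 x - f2 x| ^ p) *
            ENNReal.ofReal ((((x.1 - y.1) ^ 2 + (x.2 + y.2) ^ 2) ^ ((3:ℝ)/2))⁻¹) +
           ENNReal.ofReal (|f2 x - f2 y| ^ p /
            (((x.1 - y.1) ^ 2 + (x.2 - y.2) ^ 2) ^ ((3:ℝ)/2)))) :=
        setLIntegral_mono' hT fun x hx => setLIntegral_mono' hT fun y hy => key x hx y hy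
    _ = ∫⁻ x in refTri, ENNReal.ofReal (2 ^ p) *
          ((∫⁻ y in refTri, ENNReal.ofReal (|f1 x - f2 x| ^ p) *
            ENNReal.ofReal ((((x.1 - y.1) ^ 2 + (x.2 + y.2) ^ 2) ^ ((3:ℝ)/2))⁻¹)) +
           ∫⁻ y in refTri, ENNReal.ofReal (|f2 x - f2 y| ^ p /
            (((x.1 - y.1) ^ 2 + (x.2 - y.2) ^ 2) ^ ((3:ℝ)/2)))) := by
        refine lintegral_congr fun x => ?_
        have m1 : Measurable fun y : ℝ × ℝ => ENNReal.ofReal (|f1 x - f2 x| ^ p) *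
            ENNReal.ofReal ((((x.1 - y.1) ^ 2 + (x.2 + y.2) ^ 2) ^ ((3:ℝ)/2))⁻¹) := by fun_prop
        have m2 : Measurable fun y : ℝ × ℝ => ENNReal.ofReal (|f2 x - f2 y| ^ p /
            (((x.1 - y.1) ^ 2 + (x.2 - y.2) ^ 2) ^ ((3:ℝ)/2))) := by fun_prop
        rw [lintegral_const_mul' _ _ ENNReal.ofReal_ne_top, lintegral_add_left m1]
    _ = ENNReal.ofReal (2 ^ p) *
          ((∫⁻ x in refTri, ∫⁻ y in refTri, ENNReal.ofReal (|f1 x - f2 x| ^ p) *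
            ENNReal.ofReal ((((x.1 - y.1) ^ 2 + (x.2 + y.2) ^ 2) ^ ((3:ℝ)/2))⁻¹)) +
           ∫⁻ x in refTri, ∫⁻ y in refTri, ENNReal.ofReal (|f2 x - f2 y| ^ p /
            (((x.1 - y.1) ^ 2 + (x.2 - y.2) ^ 2) ^ ((3:ℝ)/2)))) := by
        rw [lintegral_const_mul' _ _ ENNReal.ofReal_ne_top, lintegral_add_left mPhiI]
    _ ≤ ENNReal.ofReal (2 ^ p) *
          (ENNReal.ofReal π *
            (∫⁻ x in refTri, ENNReal.ofReal (|f1 x - f2 x| ^ p / x.2)) +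
           gagNorm p s f2) :=
        mul_le_mul_right (add_le_add hPhiBound hgag2) _
    _ ≤ ENNReal.ofReal (2 ^ p) * (ENNReal.ofReal π * S + S) := by
        have h1 : (∫⁻ x in refTri, ENNReal.ofReal (|f1 x - f2 x| ^ p / x.2)) ≤ S :=
          le_add_self
        have h2 : gagNorm p s f2 ≤ S :=
          le_trans le_add_self le_self_add
        exact mul_le_mul_right (add_le_add (mul_le_mul_right h1 _) h2) _
    _ = ENNReal.ofReal (2 ^ p * (π + 1)) * S := by
        rw [ENNReal.ofReal_mul (Real.rpow_nonneg (by norm_num) p),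
          ENNReal.ofReal_add Real.pi_nonneg zero_le_one, ENNReal.ofReal_one,
          mul_assoc, add_mul, one_mul]
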